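/- For every integer k ≥ 1, the cyclic subgroup generated by the image of the generator y in the group G_k with presentation ⟨x, y | x y x⁻¹ = y⁻¹, x² = y^k⟩ has index 2 in G_k, and is a normal subgroup of G_k. -/

import Mathlib

/-- The relations of the generalised quaternion group `Q_{4k}`:
`x y x⁻¹ y` and `x² y^{-k}`, where `x = FreeGroup.of 0` and `y = FreeGroup.of 1`. -/
def quaternionRels (k : ℕ) : Set (FreeGroup (Fin 2)) :=
  {FreeGroup.of 0 * FreeGroup.of 1 * (FreeGroup.of 0)⁻¹ * FreeGroup.of 1,
   FreeGroup.of 0 ^ 2 * FreeGroup.of 1 ^ (-(k : ℤ))}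

namespace QuatAux

variable (k : ℕ)

abbrev G := PresentedGroup (quaternionRels k)

noncomputable abbrev x : G k := PresentedGroup.of 0
noncomputable abbrev y : G k := PresentedGroup.of 1

lemma rel_eq_one {r : FreeGroup (Fin 2)} (hr : r ∈ quaternionRels k) :
    PresentedGroup.mk (quaternionRels k) r = 1 :=
  (QuotientGroup.eq_one_iff r).2 (Subgroup.subset_normalClosure hr)

lemma rel1 : x k * y k * (x k)⁻¹ * y k = 1 := by
  have := rel_eq_one k (r := FreeGroup.of 0 * FreeGroup.of 1 * (FreeGroup.of 0)⁻¹ * FreeGroup.of 1)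
    (Or.inl rfl)
  simp [map_mul, map_inv] at this
  exact this

lemma rel2 : x k ^ 2 * y k ^ (-(k : ℤ)) = 1 := by
  have := rel_eq_one k (r := FreeGroup.of 0 ^ 2 * FreeGroup.of 1 ^ (-(k : ℤ)))
    (Or.inr rfl)
  simp [map_mul, map_pow, map_zpow] at this
  rw [zpow_neg, zpow_natCast]
  exact this

lemma hx2 : x k ^ 2 = y k ^ (k : ℤ) := by
  have h := rel2 k
  rw [mul_eq_one_iff_eq_inv, ← zpow_neg, neg_neg] at h
  exact h

lemma conj_y : x k * y k * (x k)⁻¹ = (y k)⁻¹ := by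
  have h := rel1 k
  rwa [mul_eq_one_iff_eq_inv] at h

lemma conj_y_zpow (a : ℤ) : x k * y k ^ a * (x k)⁻¹ = y k ^ (-a) := by
  rw [← conj_zpow, conj_y, inv_zpow, zpow_neg]

lemma ycomm (a : ℤ) : y k ^ a * x k = x k * y k ^ (-a) := by
  have h := conj_y_zpow k (-a)
  rw [neg_neg] at h
  calc y k ^ a * x k = (x k * y k ^ (-a) * (x k)⁻¹) * x k := by rw [h]
    _ = x k * y k ^ (-a) := by group

lemma xinv : (x k)⁻¹ = x k * y k ^ (-(k : ℤ)) := by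
  apply inv_eq_of_mul_eq_one_right
  rw [← mul_assoc, ← pow_two]
  exact rel2 k

noncomputable def S : Subgroup (G k) where
  carrier := {g | ∃ a : ℤ, g = y k ^ a ∨ g = x k * y k ^ a}
  one_mem' := ⟨0, Or.inl (by simp)⟩
  mul_mem' := by
    rintro g h ⟨a, rfl | rfl⟩ ⟨b, rfl | rfl⟩
    · exact ⟨a + b, Or.inl (zpow_add _ _ _).symm⟩
    · refine ⟨b - a, Or.inr ?_⟩
      rw [← mul_assoc, ycomm, mul_assoc, ← zpow_add]
      ring_nf
    · refine ⟨a + b, Or.inr ?_⟩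
      rw [mul_assoc, ← zpow_add]
    · refine ⟨k - a + b, Or.inl ?_⟩
      calc x k * y k ^ a * (x k * y k ^ b)
          = x k * (y k ^ a * x k) * y k ^ b := by group
        _ = x k * (x k * y k ^ (-a)) * y k ^ b := by rw [ycomm]
        _ = x k ^ 2 * (y k ^ (-a) * y k ^ b) := by rw [pow_two]; group
        _ = y k ^ (k : ℤ) * (y k ^ (-a) * y k ^ b) := by rw [hx2]
        _ = y k ^ ((k : ℤ) - a + b) := by rw [← zpow_add, ← zpow_add]; ring_nf
  inv_mem' := by
    rintro g ⟨a, rfl | rfl⟩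
    · exact ⟨-a, Or.inl (by rw [zpow_neg])⟩
    · refine ⟨a - k, Or.inr ?_⟩
      rw [mul_inv_rev, xinv, ← mul_assoc, ← zpow_neg, ycomm, neg_neg, mul_assoc, ← zpow_add]
      ring_nf

lemma S_eq_top (g : G k) : g ∈ S k :=
  PresentedGroup.generated_by _ _ (by
    intro j
    fin_cases j
    · exact ⟨0, Or.inr (by simp)⟩
    · exact ⟨1, Or.inl (by simp)⟩) g

noncomputable def φ : G k →* Multiplicative (ZMod 2) :=
  PresentedGroup.toGroup (f := ![Multiplicative.ofAdd 1, 1]) (by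
    rintro r (rfl | rfl)
    · simp [map_mul, map_inv]
    · simp only [map_mul, map_pow, map_zpow, FreeGroup.lift_apply_of]
      norm_num
      decide)

lemma φx : φ k (x k) = Multiplicative.ofAdd 1 := PresentedGroup.toGroup.of _
lemma φy : φ k (y k) = 1 := PresentedGroup.toGroup.of _

lemma ker_eq : (φ k).ker = Subgroup.zpowers (y k) := by
  apply le_antisymm
  · intro g hg
    rcases S_eq_top k g with ⟨a, rfl | rfl⟩
    · exact Subgroup.zpow_mem _ (Subgroup.mem_zpowers _) a
    · exfalso
      have : φ k (x k * y k ^ a) = Multiplicative.ofAdd 1 := by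
        rw [map_mul, map_zpow, φx, φy, one_zpow, mul_one]
      rw [MonoidHom.mem_ker, this] at hg
      exact absurd hg (by decide)
  · rw [Subgroup.zpowers_le, MonoidHom.mem_ker]
    exact φy k

lemma range_top : (φ k).range = ⊤ := by
  rw [eq_top_iff]
  intro g _
  have hall : ∀ h : Multiplicative (ZMod 2), h = 1 ∨ h = Multiplicative.ofAdd 1 := by decide
  rcases hall g with rfl | rfl
  · exact one_mem _
  · exact ⟨x k, φx k⟩

end QuatAux

theorem presented_quaternion_zpowers_y_index_two_normal (k : ℕ) (hk : 1 ≤ k) :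
    (Subgroup.zpowers (PresentedGroup.of (rels := quaternionRels k) 1)).index = 2 ∧
    (Subgroup.zpowers (PresentedGroup.of (rels := quaternionRels k) 1)).Normal := by
  rw [← QuatAux.ker_eq k]
  constructor
  · rw [Subgroup.index_ker, QuatAux.range_top]
    rw [Subgroup.card_top]
    simp [Nat.card_eq_fintype_card]
  · exact (QuatAux.φ k).normal_ker
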